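/- Let e : ℝ → ℝ^d be twice differentiable with e''(t) = −Ω²·e(t) + G·e(t) for all t, e(t₀) = e₀ and e'(t₀) = ė₀ := C_B·b₀ − Ω²·p₀, where the initial data satisfy ‖Ω·e₀‖² ≤ (2/3)H₀, ‖C_B·b₀‖² ≤ (1/3)H₀, ‖Ω²·p₀‖² ≤ (1/3)H₀ and ‖C_E·e₀‖² ≤ 2H₀. Then the Hamiltonian H(e(t), e'(t)) := (1/2)‖e'(t)‖² + (1/2)‖Ω·e(t)‖² + (1/2)‖C_E·e(t)‖² satisfies H(e(t), e'(t)) ≤ 2·H₀ for all t ≥ t₀. -/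

import Mathlib

noncomputable def mulE {d : ℕ} (A : Matrix (Fin d) (Fin d) ℝ)
    (v : EuclideanSpace ℝ (Fin d)) : EuclideanSpace ℝ (Fin d) :=
  (WithLp.equiv 2 (Fin d → ℝ)).symm (A.mulVec ((WithLp.equiv 2 (Fin d → ℝ)) v))

section aux
open scoped RealInnerProductSpace
variable {d : ℕ}

noncomputable def mulECLM (A : Matrix (Fin d) (Fin d) ℝ) :
    EuclideanSpace ℝ (Fin d) →L[ℝ] EuclideanSpace ℝ (Fin d) :=
  LinearMap.toContinuousLinearMap
    { toFun := mulE A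
      map_add' := by
        intro x y
        simp [mulE, Matrix.mulVec_add]
      map_smul' := by
        intro c x
        simp [mulE, Matrix.mulVec_smul] }

lemma mulECLM_apply (A : Matrix (Fin d) (Fin d) ℝ) (x : EuclideanSpace ℝ (Fin d)) :
    mulECLM A x = mulE A x := rfl

lemma mulE_hasDerivAt (A : Matrix (Fin d) (Fin d) ℝ) {f : ℝ → EuclideanSpace ℝ (Fin d)}
    {f' : EuclideanSpace ℝ (Fin d)} {t : ℝ} (h : HasDerivAt f f' t) :
    HasDerivAt (fun s => mulE A (f s)) (mulE A f') t := by
  exact ((mulECLM A).hasFDerivAt.comp_hasDerivAt t h)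

lemma inner_mulE (A : Matrix (Fin d) (Fin d) ℝ) (x y : EuclideanSpace ℝ (Fin d)) :
    ⟪mulE A x, y⟫ = ⟪x, mulE A.transpose y⟫ := by
  simp only [mulE, PiLp.inner_apply, RCLike.inner_apply, conj_trivial,
    WithLp.equiv_symm_apply, WithLp.equiv_apply, WithLp.ofLp_toLp]
  have key : ∀ u v : Fin d → ℝ,
      dotProduct (A.mulVec u) v = dotProduct u (A.transpose.mulVec v) := by
    intro u v
    rw [Matrix.dotProduct_mulVec, Matrix.vecMul_transpose]
  have := key x.ofLp y.ofLp
  simp only [dotProduct] at this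
  simpa [mul_comm] using this

lemma mulE_mulE (A B : Matrix (Fin d) (Fin d) ℝ) (x : EuclideanSpace ℝ (Fin d)) :
    mulE A (mulE B x) = mulE (A * B) x := by
  simp [mulE, Matrix.mulVec_mulVec]

lemma mulE_neg (A : Matrix (Fin d) (Fin d) ℝ) (x : EuclideanSpace ℝ (Fin d)) :
    mulE (-A) x = -mulE A x := by
  simp [mulE, Matrix.neg_mulVec]

end aux

/-- Boundedness of the Hamiltonian:  for the exact solution of
`e'' = −Ω²·e + G·e` with `e(t₀) = e₀`, `e'(t₀) = C_B·b₀ − Ω²·p₀`, under the stated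
bounds on the initial data the Hamiltonian
`H(e, e') = (1/2)‖e'‖² + (1/2)‖Ω·e‖² + (1/2)‖C_E·e‖²` satisfies
`H(e(t), e'(t)) ≤ 2·H₀` for all `t ≥ t₀`. -/
theorem stmt6
    (d : ℕ) (hd : 1 ≤ d)
    (CE CB : Matrix (Fin d) (Fin d) ℝ) (hCB : CB = CE.transpose)
    (ωv : Fin d → ℝ) (hωv : ∀ i, 0 ≤ ωv i)
    (t0 H0 : ℝ) (hH0 : 0 < H0)
    (p0 e0 b0 : EuclideanSpace ℝ (Fin d))
    (e ed : ℝ → EuclideanSpace ℝ (Fin d))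
    (he : ∀ t, HasDerivAt e (ed t) t)
    (hed : ∀ t, HasDerivAt ed
      (-mulE ((Matrix.diagonal ωv)^2) (e t) + mulE (-(CB * CE)) (e t)) t)
    (hinit : e t0 = e0)
    (hinitd : ed t0 = mulE CB b0 - mulE ((Matrix.diagonal ωv)^2) p0)
    (hΩe0 : ‖mulE (Matrix.diagonal ωv) e0‖^2 ≤ (2/3) * H0)
    (hCBb0 : ‖mulE CB b0‖^2 ≤ (1/3) * H0)
    (hΩ2p0 : ‖mulE ((Matrix.diagonal ωv)^2) p0‖^2 ≤ (1/3) * H0)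
    (hCEe0 : ‖mulE CE e0‖^2 ≤ 2 * H0) :
    ∀ t : ℝ, t0 ≤ t →
      (1/2) * ‖ed t‖^2 + (1/2) * ‖mulE (Matrix.diagonal ωv) (e t)‖^2
        + (1/2) * ‖mulE CE (e t)‖^2 ≤ 2 * H0 := by
  classical
  set Om := Matrix.diagonal ωv with hOm
  -- energy function (without the 1/2 factors)
  set F : ℝ → ℝ := fun t =>
    (inner ℝ (ed t) (ed t) : ℝ) + (inner ℝ (mulE Om (e t)) (mulE Om (e t)) : ℝ)
      + (inner ℝ (mulE CE (e t)) (mulE CE (e t)) : ℝ) with hF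
  have hderiv : ∀ t, HasDerivAt F 0 t := by
    intro t
    have h1 := (hed t).inner ℝ (hed t)
    have h2 := (mulE_hasDerivAt Om (he t)).inner ℝ (mulE_hasDerivAt Om (he t))
    have h3 := (mulE_hasDerivAt CE (he t)).inner ℝ (mulE_hasDerivAt CE (he t))
    have := (h1.add h2).add h3
    convert this using 1
    · rfl
    · rfl
    · rfl
    have hOmsym : Om.transpose = Om := Matrix.diagonal_transpose ωv
    have e1 : (inner ℝ (mulE Om (ed t)) (mulE Om (e t)) : ℝ)
        = inner ℝ (ed t) (mulE (Om ^ 2) (e t)) := by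
      rw [inner_mulE, hOmsym, mulE_mulE, ← sq]
    have e2 : (inner ℝ (mulE CE (ed t)) (mulE CE (e t)) : ℝ)
        = inner ℝ (ed t) (mulE (CB * CE) (e t)) := by
      rw [inner_mulE, hCB, mulE_mulE]
    have e1' : (inner ℝ (mulE Om (e t)) (mulE Om (ed t)) : ℝ)
        = inner ℝ (ed t) (mulE (Om ^ 2) (e t)) := by
      rw [real_inner_comm]; exact e1
    have e2' : (inner ℝ (mulE CE (e t)) (mulE CE (ed t)) : ℝ)
        = inner ℝ (ed t) (mulE (CB * CE) (e t)) := by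
      rw [real_inner_comm]; exact e2
    rw [e1, e2, e1', e2']
    have ha : (inner ℝ (ed t) (-mulE (Om ^ 2) (e t) + mulE (-(CB * CE)) (e t)) : ℝ)
        = -(inner ℝ (ed t) (mulE (Om ^ 2) (e t)) : ℝ)
          - (inner ℝ (ed t) (mulE (CB * CE) (e t)) : ℝ) := by
      rw [inner_add_right, inner_neg_right, mulE_neg, inner_neg_right]; ring
    have hb : (inner ℝ (-mulE (Om ^ 2) (e t) + mulE (-(CB * CE)) (e t)) (ed t) : ℝ)
        = -(inner ℝ (ed t) (mulE (Om ^ 2) (e t)) : ℝ)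
          - (inner ℝ (ed t) (mulE (CB * CE) (e t)) : ℝ) := by
      rw [real_inner_comm]; exact ha
    rw [ha, hb]; ring
  have hconst : ∀ t, F t = F t0 := by
    intro t
    have hdf : Differentiable ℝ F := fun x => (hderiv x).differentiableAt
    have h0 : ∀ x, deriv F x = 0 := fun x => (hderiv x).deriv
    exact is_const_of_deriv_eq_zero hdf h0 t t0
  intro t _
  have hFt : F t = F t0 := hconst t
  have hFt0 : F t0 ≤ 4 * H0 := by
    have hn : ∀ v : EuclideanSpace ℝ (Fin d), (inner ℝ v v : ℝ) = ‖v‖ ^ 2 :=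
      fun v => real_inner_self_eq_norm_sq v
    have hsub : ‖mulE CB b0 - mulE (Om ^ 2) p0‖ ^ 2
        ≤ 2 * ‖mulE CB b0‖ ^ 2 + 2 * ‖mulE (Om ^ 2) p0‖ ^ 2 := by
      have h := norm_sub_le (mulE CB b0) (mulE (Om ^ 2) p0)
      have h2 : ‖mulE CB b0 - mulE (Om ^ 2) p0‖ ^ 2
          ≤ (‖mulE CB b0‖ + ‖mulE (Om ^ 2) p0‖) ^ 2 := by
        apply pow_le_pow_left₀ (norm_nonneg _) h
      nlinarith [sq_nonneg (‖mulE CB b0‖ - ‖mulE (Om ^ 2) p0‖)]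
    simp only [hF, hinit, hinitd, hn]
    nlinarith
  have hFex : (1/2 : ℝ) * ‖ed t‖^2 + (1/2) * ‖mulE Om (e t)‖^2 + (1/2) * ‖mulE CE (e t)‖^2
      = (1/2) * F t := by
    simp only [hF, real_inner_self_eq_norm_sq]; ring
  clear_value F
  rw [hFex, hFt]
  linarith
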